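/- Let μ be the Lévy measure of a subordinator with H(λ) = φ(λ) - λφ'(λ). Suppose H satisfies the upper scaling condition: there exist C_U > 0, 0 < δ < 2, λ_U ≥ 0 with H(λx) ≤ C_U x^δ H(λ) for all λ > λ_U, x ≥ 1. Then there exists M ∈ (0,1) such that μ(r,∞) ≥ (M²/2)·H(r^{-1}) for all 0 < r < M·λ_U^{-1}. -/

import Mathlib

open MeasureTheory Set Real

lemma aux_nonneg (s : ℝ) : 0 ≤ 1 - (1 + s) * exp (-s) := by
  have h := Real.add_one_le_exp s
  have h2 : (1 + s) * exp (-s) ≤ exp s * exp (-s) := by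
    apply mul_le_mul_of_nonneg_right _ (exp_pos _).le
    linarith
  rw [← Real.exp_add] at h2
  simp at h2
  linarith

lemma aux_le_one (s : ℝ) (hs : 0 ≤ s) : 1 - (1 + s) * exp (-s) ≤ 1 := by
  nlinarith [exp_pos (-s)]

lemma aux_le_sq (s : ℝ) (hs : 0 ≤ s) : 1 - (1 + s) * exp (-s) ≤ s^2/2 := by
  set f : ℝ → ℝ := fun s => s^2/2 - 1 + (1 + s) * exp (-s) with hf
  have hd : ∀ x : ℝ, HasDerivAt f (x * (1 - exp (-x))) x := by
    intro x
    have h1 : HasDerivAt (fun s : ℝ => s^2/2 - 1) x x := by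
      simpa using ((hasDerivAt_pow 2 x).div_const 2).sub_const 1
    have h2 : HasDerivAt (fun s : ℝ => (1 + s) * exp (-s)) (exp (-x) + (1 + x) * (-exp (-x))) x := by
      have ha : HasDerivAt (fun s : ℝ => 1 + s) 1 x := by
        simpa using (hasDerivAt_id x).const_add 1
      have hb : HasDerivAt (fun s : ℝ => exp (-s)) (-exp (-x)) x := by
        exact ((Real.hasDerivAt_exp (-x)).comp x ((hasDerivAt_id x).neg)).congr_deriv (by simp)
      exact (ha.mul hb).congr_deriv (by ring)
    exact (h1.add h2).congr_deriv (by ring)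
  have hmono : MonotoneOn f (Ici 0) := by
    apply monotoneOn_of_deriv_nonneg (convex_Ici 0)
      (Continuous.continuousOn (by continuity))
    · intro x hx
      exact (hd x).differentiableAt.differentiableWithinAt
    · intro x hx
      rw [(hd x).deriv]
      simp only [interior_Ici, mem_Ioi] at hx
      have : exp (-x) ≤ 1 := by
        rw [exp_le_one_iff]; linarith
      nlinarith
  have h0 : f 0 = 0 := by simp [hf]
  have := hmono (self_mem_Ici) (mem_Ici.2 hs) hs
  rw [h0] at this
  simp only [hf] at this
  linarith

lemma aux_ge (s : ℝ) (hs0 : 0 ≤ s) (hs1 : s ≤ 1) :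
    s^2/(2*exp 1) ≤ 1 - (1 + s) * exp (-s) := by
  set f : ℝ → ℝ := fun s => 1 - (1 + s) * exp (-s) - s^2/(2*exp 1) with hf
  have hd : ∀ x : ℝ, HasDerivAt f (x * exp (-x) - x / exp 1) x := by
    intro x
    have h2 : HasDerivAt (fun s : ℝ => (1 + s) * exp (-s)) (exp (-x) + (1 + x) * (-exp (-x))) x := by
      have ha : HasDerivAt (fun s : ℝ => 1 + s) 1 x := by
        simpa using (hasDerivAt_id x).const_add 1
      have hb : HasDerivAt (fun s : ℝ => exp (-s)) (-exp (-x)) x := by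
        exact ((Real.hasDerivAt_exp (-x)).comp x ((hasDerivAt_id x).neg)).congr_deriv (by simp)
      exact (ha.mul hb).congr_deriv (by ring)
    have h3 : HasDerivAt (fun s : ℝ => s^2/(2*exp 1)) (2 * x / (2 * exp 1)) x := by
      simpa [pow_one] using (hasDerivAt_pow 2 x).div_const (2 * exp 1)
    have := (h2.const_sub 1).sub h3
    exact this.congr_deriv (by rw [mul_div_mul_left _ _ (two_ne_zero' ℝ)]; ring)
  have hmono : MonotoneOn f (Icc 0 1) := by
    apply monotoneOn_of_deriv_nonneg (convex_Icc 0 1)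
      (Continuous.continuousOn (by continuity))
    · intro x hx
      exact (hd x).differentiableAt.differentiableWithinAt
    · intro x hx
      rw [(hd x).deriv]
      rw [interior_Icc, mem_Ioo] at hx
      have h1 : exp (-1 : ℝ) ≤ exp (-x) := exp_le_exp.2 (by linarith [hx.2])
      have h2 : x / exp 1 = x * exp (-1 : ℝ) := by
        rw [Real.exp_neg]; ring
      rw [h2]
      nlinarith [hx.1]
  have h0 : f 0 = 0 := by simp [hf]
  have := hmono (left_mem_Icc.2 zero_le_one) (mem_Icc.2 ⟨hs0, hs1⟩) hs0
  rw [h0] at this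
  simp only [hf] at this
  linarith

lemma integrable_of_bound (μ : Measure ℝ)
    (hμ : ∫⁻ t in Ioi (0:ℝ), ENNReal.ofReal (min 1 t) ∂μ < ⊤)
    (s : Set ℝ) (hs : MeasurableSet s) (hsub : s ⊆ Ioi 0)
    (h : ℝ → ℝ) (hm : AEStronglyMeasurable h (μ.restrict s))
    (K : ℝ) (hK : 0 ≤ K) (hbd : ∀ t ∈ s, |h t| ≤ K * min 1 t) :
    IntegrableOn h s μ := by
  refine ⟨hm, ?_⟩
  rw [hasFiniteIntegral_iff_norm]
  calc ∫⁻ t in s, ENNReal.ofReal ‖h t‖ ∂μ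
      ≤ ∫⁻ t in s, ENNReal.ofReal K * ENNReal.ofReal (min 1 t) ∂μ := by
        apply lintegral_mono_ae
        rw [ae_restrict_iff' hs]
        filter_upwards with t ht
        rw [← ENNReal.ofReal_mul hK]
        exact ENNReal.ofReal_le_ofReal (by simpa using hbd t ht)
    _ = ENNReal.ofReal K * ∫⁻ t in s, ENNReal.ofReal (min 1 t) ∂μ :=
        lintegral_const_mul' _ _ ENNReal.ofReal_ne_top
    _ ≤ ENNReal.ofReal K * ∫⁻ t in Ioi (0:ℝ), ENNReal.ofReal (min 1 t) ∂μ := by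
        exact mul_le_mul_right (lintegral_mono_set hsub) _
    _ < ⊤ := ENNReal.mul_lt_top ENNReal.ofReal_lt_top hμ

lemma meas_Ioi_lt_top (μ : Measure ℝ)
    (hμ : ∫⁻ t in Ioi (0:ℝ), ENNReal.ofReal (min 1 t) ∂μ < ⊤)
    (c : ℝ) (hc : 0 < c) : μ (Ioi c) < ⊤ := by
  have h1 : ENNReal.ofReal (min 1 c) * μ (Ioi c)
      ≤ ∫⁻ t in Ioi (0:ℝ), ENNReal.ofReal (min 1 t) ∂μ := by
    rw [← setLIntegral_const]
    calc ∫⁻ _ in Ioi c, ENNReal.ofReal (min 1 c) ∂μ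
        ≤ ∫⁻ t in Ioi c, ENNReal.ofReal (min 1 t) ∂μ := by
          apply setLIntegral_mono' measurableSet_Ioi
          intro t ht
          exact ENNReal.ofReal_le_ofReal (min_le_min le_rfl (le_of_lt ht))
      _ ≤ _ := lintegral_mono_set (fun t ht => lt_trans hc ht)
  have h2 : (0:ENNReal) < ENNReal.ofReal (min 1 c) := by
    simp [ENNReal.ofReal_pos, lt_min one_pos hc, hc]
  by_contra htop
  push_neg at htop
  rw [top_le_iff.1 htop, ENNReal.mul_top h2.ne'] at h1
  exact hμ.ne (top_le_iff.1 h1)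

lemma texp_bound (l t : ℝ) (hl : 0 < l) (ht : 0 < t) :
    t * exp (-(l * t)) ≤ (1 + 1/l) * min 1 t := by
  have hil : 0 < 1/l := by positivity
  rcases le_total t 1 with h | h
  · rw [min_eq_right h]
    have h1 : exp (-(l * t)) ≤ 1 := by rw [exp_le_one_iff]; nlinarith
    nlinarith
  · rw [min_eq_left h]
    have h2 : l * t ≤ exp (l * t) := by nlinarith [Real.add_one_le_exp (l * t)]
    have h4 : t * exp (-(l * t)) ≤ 1/l := by
      rw [Real.exp_neg, le_div_iff₀ hl]
      calc t * (exp (l*t))⁻¹ * l = (l * t) * (exp (l*t))⁻¹ := by ring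
        _ ≤ exp (l*t) * (exp (l*t))⁻¹ :=
            mul_le_mul_of_nonneg_right h2 (by positivity)
        _ = 1 := mul_inv_cancel₀ (exp_pos _).ne'
    linarith

lemma exp_nonneg_bound (l t : ℝ) (hl : 0 ≤ l) (ht : 0 ≤ t) : 0 ≤ 1 - exp (-(l * t)) := by
  have : exp (-(l * t)) ≤ 1 := by rw [exp_le_one_iff]; nlinarith
  linarith

lemma integrable_one_sub_exp (μ : Measure ℝ)
    (hμ : ∫⁻ t in Ioi (0:ℝ), ENNReal.ofReal (min 1 t) ∂μ < ⊤)
    (l : ℝ) (hl : 0 < l) :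
    Integrable (fun t => 1 - exp (-(l * t))) (μ.restrict (Ioi 0)) := by
  apply integrable_of_bound μ hμ _ measurableSet_Ioi (fun _ ht => ht)
    _ (Continuous.aestronglyMeasurable (by continuity))
    (max 1 l) (le_trans zero_le_one (le_max_left _ _))
  intro t ht
  rw [mem_Ioi] at ht
  rw [abs_of_nonneg (exp_nonneg_bound l t hl.le ht.le)]
  rcases le_total t 1 with h | h
  · have h1 : 1 - exp (-(l * t)) ≤ l * t := by
      nlinarith [Real.add_one_le_exp (-(l*t))]
    have h2 : l * t ≤ max 1 l * min 1 t := by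
      rw [min_eq_right h]
      exact mul_le_mul_of_nonneg_right (le_max_right _ _) ht.le
    linarith
  · have h1 : 1 - exp (-(l*t)) ≤ 1 := by nlinarith [exp_pos (-(l*t))]
    have h2 : (1:ℝ) ≤ max 1 l * min 1 t := by
      rw [min_eq_left h]
      simpa using le_max_left 1 l
    linarith

lemma integrable_t_exp (μ : Measure ℝ)
    (hμ : ∫⁻ t in Ioi (0:ℝ), ENNReal.ofReal (min 1 t) ∂μ < ⊤)
    (l : ℝ) (hl : 0 < l) :
    Integrable (fun t => t * exp (-(l * t))) (μ.restrict (Ioi 0)) := by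
  apply integrable_of_bound μ hμ _ measurableSet_Ioi (fun _ ht => ht)
    _ (Continuous.aestronglyMeasurable (by continuity))
    (1 + 1/l) (by positivity)
  intro t ht
  rw [mem_Ioi] at ht
  rw [abs_of_nonneg (by positivity)]
  exact texp_bound l t hl ht

lemma hasDerivAt_int (μ : Measure ℝ)
    (hμ : ∫⁻ t in Ioi (0:ℝ), ENNReal.ofReal (min 1 t) ∂μ < ⊤)
    (l : ℝ) (hl : 0 < l) :
    HasDerivAt (fun x => ∫ t in Ioi (0:ℝ), (1 - exp (-(x * t))) ∂μ)
      (∫ t in Ioi (0:ℝ), t * exp (-(l * t)) ∂μ) l := by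
  have hl2 : 0 < l/2 := half_pos hl
  have key := hasDerivAt_integral_of_dominated_loc_of_deriv_le (μ := μ.restrict (Ioi 0))
    (F := fun x t => 1 - exp (-(x * t))) (F' := fun x t => t * exp (-(x * t)))
    (x₀ := l) (s := Metric.ball l (l/2)) (bound := fun t => (1 + 2/l) * min 1 t) (Metric.ball_mem_nhds l hl2)
    (by filter_upwards with x; exact Continuous.aestronglyMeasurable (by continuity))
    (integrable_one_sub_exp μ hμ l hl)
    (Continuous.aestronglyMeasurable (by continuity))
    ?_ ?_ ?_
  · exact key.2
  · rw [ae_restrict_iff' measurableSet_Ioi]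
    filter_upwards with t ht
    intro x hx
    rw [mem_Ioi] at ht
    rw [Metric.mem_ball, Real.dist_eq, abs_lt] at hx
    have hx2 : l/2 ≤ x := by linarith [hx.1]
    rw [Real.norm_eq_abs, abs_of_nonneg (by positivity)]
    have h1 : exp (-(x * t)) ≤ exp (-(l/2 * t)) := by
      apply exp_le_exp.2; nlinarith
    have h2 := texp_bound (l/2) t hl2 ht
    have h3 : (1:ℝ)/(l/2) = 2/l := by rw [one_div_div]
    rw [h3] at h2
    calc t * exp (-(x*t)) ≤ t * exp (-(l/2*t)) := mul_le_mul_of_nonneg_left h1 ht.le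
      _ ≤ (1 + 2/l) * min 1 t := h2
  · apply integrable_of_bound μ hμ _ measurableSet_Ioi (fun _ ht => ht)
      _ (Continuous.aestronglyMeasurable
        (continuous_const.mul (continuous_const.min continuous_id)))
      (1 + 2/l) (by positivity)
    intro t ht
    rw [mem_Ioi] at ht
    have hm : 0 < min 1 t := lt_min one_pos ht
    simp only [Pi.mul_apply, id_eq]
    rw [abs_of_nonneg (mul_pos (by positivity) hm).le]
  · filter_upwards with t
    intro x _
    have h1 : HasDerivAt (fun x : ℝ => -(x * t)) (-t) x := by
      exact (((hasDerivAt_id x).mul_const t).neg).congr_deriv (by ring)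
    have h2 := (Real.hasDerivAt_exp (-(x * t))).comp x h1
    have h3 := h2.const_sub 1
    exact h3.congr_deriv (by ring)

lemma Hrep (μ : Measure ℝ)
    (hμ : ∫⁻ t in Ioi (0:ℝ), ENNReal.ofReal (min 1 t) ∂μ < ⊤)
    (b : ℝ) (φ H : ℝ → ℝ)
    (hφ : ∀ l > 0, φ l = b * l + ∫ t in Ioi (0:ℝ), (1 - exp (-(l * t))) ∂μ)
    (hH : ∀ l > 0, H l = φ l - l * deriv φ l)
    (l : ℝ) (hl : 0 < l) :
    H l = ∫ t in Ioi (0:ℝ), (1 - (1 + l * t) * exp (-(l * t))) ∂μ := by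
  have hder : HasDerivAt φ (b + ∫ t in Ioi (0:ℝ), t * exp (-(l * t)) ∂μ) l := by
    have hψ : HasDerivAt (fun x => b * x + ∫ t in Ioi (0:ℝ), (1 - exp (-(x * t))) ∂μ)
        (b + ∫ t in Ioi (0:ℝ), t * exp (-(l * t)) ∂μ) l := by
      have h1 : HasDerivAt (fun x : ℝ => b * x) b l := by
        simpa using (hasDerivAt_id l).const_mul b
      exact h1.add (hasDerivAt_int μ hμ l hl)
    apply hψ.congr_of_eventuallyEq
    filter_upwards [Ioi_mem_nhds hl] with x hx
    exact hφ x hx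
  rw [hH l hl, hφ l hl, hder.deriv]
  have hint1 := integrable_one_sub_exp μ hμ l hl
  have hint2 := (integrable_t_exp μ hμ l hl).const_mul l
  rw [mul_add, ← integral_const_mul]
  have : b * l + (∫ t in Ioi (0:ℝ), (1 - exp (-(l * t))) ∂μ)
      - (l * b + ∫ t in Ioi (0:ℝ), l * (t * exp (-(l * t))) ∂μ)
      = (∫ t in Ioi (0:ℝ), (1 - exp (-(l * t))) ∂μ)
      - ∫ t in Ioi (0:ℝ), l * (t * exp (-(l * t))) ∂μ := by ring
  rw [this, ← integral_sub hint1 hint2]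
  congr 1
  ext t
  ring

lemma H_nonneg (μ : Measure ℝ)
    (hμ : ∫⁻ t in Ioi (0:ℝ), ENNReal.ofReal (min 1 t) ∂μ < ⊤)
    (b : ℝ) (φ H : ℝ → ℝ)
    (hφ : ∀ l > 0, φ l = b * l + ∫ t in Ioi (0:ℝ), (1 - exp (-(l * t))) ∂μ)
    (hH : ∀ l > 0, H l = φ l - l * deriv φ l)
    (l : ℝ) (hl : 0 < l) : 0 ≤ H l := by
  rw [Hrep μ hμ b φ H hφ hH l hl]
  apply setIntegral_nonneg measurableSet_Ioi
  intro t ht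
  simpa using aux_nonneg (l * t)

lemma integrable_g (μ : Measure ℝ)
    (hμ : ∫⁻ t in Ioi (0:ℝ), ENNReal.ofReal (min 1 t) ∂μ < ⊤)
    (l : ℝ) (hl : 0 < l) :
    Integrable (fun t => 1 - (1 + l * t) * exp (-(l * t))) (μ.restrict (Ioi 0)) := by
  have h1 := integrable_one_sub_exp μ hμ l hl
  have h2 := (integrable_t_exp μ hμ l hl).const_mul l
  have h3 := h1.sub h2
  apply h3.congr
  filter_upwards with t
  simp only [Pi.sub_apply]
  ring

lemma integrable_sq (μ : Measure ℝ)
    (hμ : ∫⁻ t in Ioi (0:ℝ), ENNReal.ofReal (min 1 t) ∂μ < ⊤)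
    (c : ℝ) (hc : 0 < c) :
    IntegrableOn (fun t => t^2) (Ioc 0 c) μ := by
  apply integrable_of_bound μ hμ _ measurableSet_Ioc (fun t ht => ht.1)
    _ (Continuous.aestronglyMeasurable (by continuity))
    (c + c^2) (by positivity)
  intro t ht
  obtain ⟨ht0, htc⟩ := ht
  rw [abs_of_nonneg (by positivity)]
  rcases le_total t 1 with h | h
  · rw [min_eq_right h]
    nlinarith
  · rw [min_eq_left h]
    have hc1 : 1 ≤ c := le_trans h htc
    nlinarith

lemma split_est (μ : Measure ℝ)
    (hμ : ∫⁻ t in Ioi (0:ℝ), ENNReal.ofReal (min 1 t) ∂μ < ⊤)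
    (b : ℝ) (φ H : ℝ → ℝ)
    (hφ : ∀ l > 0, φ l = b * l + ∫ t in Ioi (0:ℝ), (1 - exp (-(l * t))) ∂μ)
    (hH : ∀ l > 0, H l = φ l - l * deriv φ l)
    (l c : ℝ) (hl : 0 < l) (hc : 0 < c) :
    H l ≤ l^2/2 * (∫ t in Ioc 0 c, t^2 ∂μ) + (μ (Ioi c)).toReal := by
  rw [Hrep μ hμ b φ H hφ hH l hl]
  have hg := integrable_g μ hμ l hl
  have hg1 : IntegrableOn (fun t => 1 - (1 + l * t) * exp (-(l * t))) (Ioc 0 c) μ :=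
    IntegrableOn.mono_set hg Ioc_subset_Ioi_self
  have hg2 : IntegrableOn (fun t => 1 - (1 + l * t) * exp (-(l * t))) (Ioi c) μ :=
    IntegrableOn.mono_set hg (Ioi_subset_Ioi hc.le)
  have hsplit : (∫ t in Ioi (0:ℝ), (1 - (1 + l * t) * exp (-(l * t))) ∂μ)
      = (∫ t in Ioc 0 c, (1 - (1 + l * t) * exp (-(l * t))) ∂μ)
      + (∫ t in Ioi c, (1 - (1 + l * t) * exp (-(l * t))) ∂μ) := by
    rw [← Ioc_union_Ioi_eq_Ioi hc.le]
    exact setIntegral_union (Ioc_disjoint_Ioi le_rfl) measurableSet_Ioi hg1 hg2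
  rw [hsplit]
  have h1 : (∫ t in Ioc 0 c, (1 - (1 + l * t) * exp (-(l * t))) ∂μ)
      ≤ l^2/2 * (∫ t in Ioc 0 c, t^2 ∂μ) := by
    rw [← integral_const_mul]
    apply setIntegral_mono_on hg1 ((integrable_sq μ hμ c hc).const_mul _) measurableSet_Ioc
    intro t ht
    have h := aux_le_sq (l * t) (le_of_lt (mul_pos hl ht.1))
    nlinarith [h]
  have h2 : (∫ t in Ioi c, (1 - (1 + l * t) * exp (-(l * t))) ∂μ) ≤ (μ (Ioi c)).toReal := by
    have hfin := meas_Ioi_lt_top μ hμ c hc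
    have hb : (∫ t in Ioi c, (1 - (1 + l * t) * exp (-(l * t))) ∂μ)
        ≤ ∫ _ in Ioi c, (1:ℝ) ∂μ := by
      apply setIntegral_mono_on hg2 (integrableOn_const hfin.ne) measurableSet_Ioi
      intro t ht
      exact aux_le_one (l * t) (le_of_lt (mul_pos hl (lt_trans hc ht)))
    simpa [measureReal_def] using hb
  linarith

lemma lower_est (μ : Measure ℝ)
    (hμ : ∫⁻ t in Ioi (0:ℝ), ENNReal.ofReal (min 1 t) ∂μ < ⊤)
    (b : ℝ) (φ H : ℝ → ℝ)
    (hφ : ∀ l > 0, φ l = b * l + ∫ t in Ioi (0:ℝ), (1 - exp (-(l * t))) ∂μ)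
    (hH : ∀ l > 0, H l = φ l - l * deriv φ l)
    (c : ℝ) (hc : 0 < c) :
    (∫ t in Ioc 0 c, t^2 ∂μ) ≤ 2 * exp 1 * c^2 * H c⁻¹ := by
  have hci : 0 < c⁻¹ := by positivity
  have hg := integrable_g μ hμ c⁻¹ hci
  have hg1 : IntegrableOn (fun t => 1 - (1 + c⁻¹ * t) * exp (-(c⁻¹ * t))) (Ioc 0 c) μ :=
    IntegrableOn.mono_set hg Ioc_subset_Ioi_self
  have key : (∫ t in Ioc 0 c, t^2 / (2 * exp 1 * c^2) ∂μ) ≤ H c⁻¹ := by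
    rw [Hrep μ hμ b φ H hφ hH c⁻¹ hci]
    have step1 : (∫ t in Ioc 0 c, t^2 / (2 * exp 1 * c^2) ∂μ)
        ≤ ∫ t in Ioc 0 c, (1 - (1 + c⁻¹ * t) * exp (-(c⁻¹ * t))) ∂μ := by
      apply setIntegral_mono_on ((integrable_sq μ hμ c hc).div_const _) hg1 measurableSet_Ioc
      intro t ht
      have hs0 : 0 ≤ c⁻¹ * t := le_of_lt (mul_pos hci ht.1)
      have hs1 : c⁻¹ * t ≤ 1 := by
        rw [← inv_mul_cancel₀ hc.ne']
        exact mul_le_mul_of_nonneg_left ht.2 (by positivity)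
      have h := aux_ge (c⁻¹ * t) hs0 hs1
      have heq : t^2 / (2 * exp 1 * c^2) = (c⁻¹*t)^2/(2*exp 1) := by
        rw [mul_pow, inv_pow]
        field_simp
      rw [heq]
      exact h
    have step2 : (∫ t in Ioc 0 c, (1 - (1 + c⁻¹ * t) * exp (-(c⁻¹ * t))) ∂μ)
        ≤ ∫ t in Ioi (0:ℝ), (1 - (1 + c⁻¹ * t) * exp (-(c⁻¹ * t))) ∂μ := by
      apply setIntegral_mono_set hg ?_ (Ioc_subset_Ioi_self.eventuallyLE)
      refine (ae_restrict_iff' measurableSet_Ioi).2 ?_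
      filter_upwards with t ht
      simpa using aux_nonneg (c⁻¹ * t)
    linarith
  rw [integral_div, div_le_iff₀ (by positivity)] at key
  linarith [key]

theorem stmt10 (μ : Measure ℝ)
    (hμ : ∫⁻ t in Ioi (0:ℝ), ENNReal.ofReal (min 1 t) ∂μ < ⊤)
    (b : ℝ) (hb : 0 ≤ b)
    (φ H : ℝ → ℝ)
    (hφ : ∀ l > 0, φ l = b * l + ∫ t in Ioi (0:ℝ), (1 - exp (-(l * t))) ∂μ)
    (hH : ∀ l > 0, H l = φ l - l * deriv φ l)
    (CU δ lU : ℝ) (hCU : 0 < CU) (hδ0 : 0 < δ) (hδ2 : δ < 2) (hlU : 0 ≤ lU)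
    (hscal : ∀ l > lU, ∀ x ≥ 1, H (l * x) ≤ CU * x ^ δ * H l) :
    ∃ M : ℝ, 0 < M ∧ M < 1 ∧
      ∀ r, 0 < r → r * lU < M → M ^ 2 / 2 * H r⁻¹ ≤ (μ (Ioi r)).toReal := by
  have h2δ : (0:ℝ) < 2 - δ := by linarith
  set B0 : ℝ := (1/(2*exp 1*CU)) ^ ((2-δ)⁻¹) with hB0
  have hB0pos : 0 < B0 := Real.rpow_pos_of_pos (by positivity) _
  set a : ℝ := min (1/2) B0 with ha
  have ha0 : 0 < a := lt_min (by norm_num) hB0pos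
  have ha12 : a ≤ 1/2 := min_le_left _ _
  have hkey : exp 1 * CU * a ^ (2-δ) ≤ 1/2 := by
    have hBpow : B0 ^ (2-δ) = 1/(2*exp 1*CU) := by
      rw [hB0, ← Real.rpow_mul (by positivity), inv_mul_cancel₀ h2δ.ne', Real.rpow_one]
    have h1 : a ^ (2-δ) ≤ B0 ^ (2-δ) :=
      Real.rpow_le_rpow ha0.le (min_le_right _ _) h2δ.le
    rw [hBpow] at h1
    have he : (0:ℝ) < exp 1 := exp_pos 1
    calc exp 1 * CU * a ^ (2-δ) ≤ exp 1 * CU * (1/(2*exp 1*CU)) := by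
          apply mul_le_mul_of_nonneg_left h1 (by positivity)
      _ = 1/2 := by field_simp
  have hadpos : (0:ℝ) < a ^ δ := Real.rpow_pos_of_pos ha0 δ
  set M : ℝ := min a (Real.sqrt (a ^ δ / CU)) with hM
  have hM0 : 0 < M := lt_min ha0 (Real.sqrt_pos.2 (by positivity))
  have hMa : M ≤ a := min_le_left _ _
  have hM1 : M < 1 := lt_of_le_of_lt (hMa.trans ha12) (by norm_num)
  have hM2 : M ^ 2 ≤ a ^ δ / CU := by
    have h1 : M ^ 2 ≤ (Real.sqrt (a ^ δ / CU)) ^ 2 :=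
      pow_le_pow_left₀ hM0.le (min_le_right _ _) 2
    rwa [Real.sq_sqrt (by positivity)] at h1
  refine ⟨M, hM0, hM1, ?_⟩
  intro r hr hrM
  have hri : 0 < r⁻¹ := by positivity
  have hBnn : 0 ≤ H r⁻¹ := H_nonneg μ hμ b φ H hφ hH r⁻¹ hri
  have hlUa : lU < a / r := by
    rw [lt_div_iff₀ hr]
    calc lU * r = r * lU := mul_comm _ _
      _ < M := hrM
      _ ≤ a := hMa
  have harpos : 0 < a / r := lt_of_le_of_lt hlU hlUa
  -- est1 : split
  have est1 := split_est μ hμ b φ H hφ hH (a/r) r harpos hr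
  -- est2 : lower bound on H r⁻¹
  have est2 := lower_est μ hμ b φ H hφ hH r hr
  -- scaling
  have hax : (1:ℝ) ≤ a⁻¹ := by
    calc (1:ℝ) = a * a⁻¹ := (mul_inv_cancel₀ ha0.ne').symm
      _ ≤ 1 * a⁻¹ := mul_le_mul_of_nonneg_right (by linarith) (by positivity)
      _ = a⁻¹ := one_mul _
  have est3 := hscal (a/r) hlUa a⁻¹ hax
  have hprod : (a/r) * a⁻¹ = r⁻¹ := by field_simp
  rw [hprod, Real.inv_rpow ha0.le] at est3
  -- combine
  set A := H (a/r) with hA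
  set B := H r⁻¹ with hBdef
  set m := (μ (Ioi r)).toReal with hm
  set K : ℝ := a ^ δ / CU with hK
  have hKpos : 0 < K := by positivity
  have est3' : K * B ≤ A := by
    have h := mul_le_mul_of_nonneg_left est3 hKpos.le
    calc K * B ≤ K * (CU * (a ^ δ)⁻¹ * A) := h
      _ = A := by rw [hK]; field_simp
  set c2 : ℝ := exp 1 * CU * a ^ (2-δ) with hc2
  have hpow : a ^ δ * a ^ (2-δ) = a ^ 2 := by
    rw [← Real.rpow_add ha0]
    norm_num
  have heq : exp 1 * a ^ 2 = K * c2 := by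
    rw [hK, hc2, ← hpow]
    field_simp
  have hInn : 0 ≤ ∫ t in Ioc 0 r, t^2 ∂μ := by
    apply setIntegral_nonneg measurableSet_Ioc
    intro t _
    positivity
  have est1' : A ≤ K * c2 * B + m := by
    have h1 : (a/r)^2/2 * (∫ t in Ioc 0 r, t^2 ∂μ) ≤ (a/r)^2/2 * (2 * exp 1 * r^2 * B) :=
      mul_le_mul_of_nonneg_left est2 (by positivity)
    have h2 : (a/r)^2/2 * (2 * exp 1 * r^2 * B) = exp 1 * a^2 * B := by
      field_simp
    calc A ≤ (a/r)^2/2 * (∫ t in Ioc 0 r, t^2 ∂μ) + m := est1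
      _ ≤ (a/r)^2/2 * (2 * exp 1 * r^2 * B) + m := by linarith
      _ = exp 1 * a^2 * B + m := by rw [h2]
      _ = K * c2 * B + m := by rw [heq]
  have hc2half : c2 ≤ 1/2 := hkey
  have final : M ^ 2 / 2 * B ≤ m := by
    nlinarith [mul_le_mul_of_nonneg_right hc2half (mul_nonneg hKpos.le hBnn),
      mul_le_mul_of_nonneg_right hM2 hBnn]
  exact final
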